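/- For r = 2, the function F_2 = ∑_{j1 ≤ j2 ≤ 2} S_{(j1,j2)}({2,3}) · S_{(2-j2, 2-j1, 2+j1+j2)} together with H_2 = 5·S_{(3,3)} satisfies: (F_2 + H_2)(x1 + x2 - 𝔻) = 0, where 𝔻 = {2x1, 2x2, x1+x2}; i.e., the Schur polynomial combination S_{(2,2,2)} + 5S_{(1,2,3)} + 6S_{(1,1,4)} + 19S_{(2,4)} + 30S_{(1,5)} + 36S_{(6)} + 5S_{(3,3)}, evaluated supersymmetrically at the difference of the two-letter alphabet {x1,x2} and the three-letter alphabet {2x1, 2x2, x1+x2}, is identically zero as a polynomial in x1, x2. -/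

import Mathlib

noncomputable section

def Scoef {R : Type*} [CommRing R] (f : PowerSeries R) : ℤ → R :=
  fun k => if k < 0 then 0 else PowerSeries.coeff (R := R) k.toNat f

/-- Jacobi–Trudi determinant `S_I = det(S_{i_p+p-q})`. -/
def schurJT {R : Type*} [CommRing R] (f : PowerSeries R) {s : ℕ} (I : Fin s → ℕ) : R :=
  (Matrix.of fun p q : Fin s => Scoef f ((I p : ℤ) + (p : ℤ) - (q : ℤ))).det

abbrev R17 : Type := MvPolynomial (Fin 2) ℤ

def x₁ : R17 := MvPolynomial.X 0
def x₂ : R17 := MvPolynomial.X 1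

set_option maxHeartbeats 1000000 in
/-- The Thom polynomial of `A_3` for `r = 2`, i.e.
`S_{222} + 5S_{123} + 6S_{114} + 19S_{24} + 30S_{15} + 36S_6 + 5S_{33}`, vanishes when
evaluated supersymmetrically at `{x1,x2} - {2x1,2x2,x1+x2}`. -/
theorem thom_A3_r2_vanishes_on_III22 (g : PowerSeries R17)
    (hg :
      ((1 - PowerSeries.C (R := R17) x₁ * PowerSeries.X) *
        (1 - PowerSeries.C (R := R17) x₂ * PowerSeries.X)) * g =
      (1 - PowerSeries.C (R := R17) (2 * x₁) * PowerSeries.X) *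
        (1 - PowerSeries.C (R := R17) (2 * x₂) * PowerSeries.X) *
        (1 - PowerSeries.C (R := R17) (x₁ + x₂) * PowerSeries.X)) :
    schurJT g ![2,2,2] + 5 * schurJT g ![1,2,3] + 6 * schurJT g ![1,1,4]
      + 19 * schurJT g ![2,4] + 30 * schurJT g ![1,5] + 36 * schurJT g ![6]
      + 5 * schurJT g ![3,3] = 0 := by
  have hg2 : g = 1 - PowerSeries.C (R := R17) (3*x₁+3*x₂) * PowerSeries.X ^ 1
      + PowerSeries.C (R := R17) (2*x₁^2+8*x₁*x₂+2*x₂^2) * PowerSeries.X ^ 2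
      - PowerSeries.C (R := R17) (4*x₁^2*x₂+4*x₁*x₂^2) * PowerSeries.X ^ 3
      + PowerSeries.C (R := R17) (x₁+x₂) * (PowerSeries.X ^ 1 * g)
      - PowerSeries.C (R := R17) (x₁*x₂) * (PowerSeries.X ^ 2 * g) := by
    simp only [map_add, map_mul, map_ofNat, map_pow] at hg ⊢
    linear_combination hg
  have key : ∀ n : ℕ, PowerSeries.coeff (R := R17) n g =
      (if n = 0 then (1:R17) else 0) - (3*x₁+3*x₂) * (if n = 1 then 1 else 0)
      + (2*x₁^2+8*x₁*x₂+2*x₂^2) * (if n = 2 then 1 else 0)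
      - (4*x₁^2*x₂+4*x₁*x₂^2) * (if n = 3 then 1 else 0)
      + (x₁+x₂) * (if 1 ≤ n then PowerSeries.coeff (R := R17) (n-1) g else 0)
      - (x₁*x₂) * (if 2 ≤ n then PowerSeries.coeff (R := R17) (n-2) g else 0) := by
    intro n
    conv_lhs => rw [hg2]
    simp only [map_add, map_sub, PowerSeries.coeff_C_mul, PowerSeries.coeff_one,
      PowerSeries.coeff_X_pow, PowerSeries.coeff_X_pow_mul', add_mul, mul_ite, mul_one, mul_zero]
    split_ifs <;> ring
  have h0 : PowerSeries.coeff (R := R17) 0 g = 1 := by rw [key]; norm_num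
  have h1 : PowerSeries.coeff (R := R17) 1 g = -(2*x₁) - 2*x₂ := by rw [key]; norm_num [h0]; ring
  have h2 : PowerSeries.coeff (R := R17) 2 g = 3*x₁*x₂ := by rw [key]; norm_num [h0, h1]; ring
  have h3 : PowerSeries.coeff (R := R17) 3 g = x₁^2*x₂ + x₁*x₂^2 := by
    rw [key]; norm_num [h1, h2]; ring
  have h4 : PowerSeries.coeff (R := R17) 4 g = x₁^3*x₂ - x₁^2*x₂^2 + x₁*x₂^3 := by
    rw [key]; norm_num [h2, h3]; ring
  have h5 : PowerSeries.coeff (R := R17) 5 g = x₁^4*x₂ - x₁^3*x₂^2 - x₁^2*x₂^3 + x₁*x₂^4 := by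
    rw [key]; norm_num [h3, h4]; ring
  have h6 : PowerSeries.coeff (R := R17) 6 g = x₁^5*x₂ - x₁^4*x₂^2 - x₁^3*x₂^3 - x₁^2*x₂^4 + x₁*x₂^5 := by
    rw [key]; norm_num [h4, h5]; ring
  have h0' : PowerSeries.constantCoeff (R := R17) g = 1 := by simpa using h0
  simp only [schurJT, Scoef, Matrix.det_fin_three, Matrix.det_fin_two, Matrix.det_fin_one,
    Matrix.of_apply, Matrix.cons_val', Matrix.cons_val_zero, Matrix.cons_val_one,
    Matrix.head_cons, Matrix.head_fin_const, Matrix.cons_val_fin_one, Fin.isValue,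
    Matrix.cons_val_two, Matrix.tail_cons]
  norm_num
  simp only [show ((2:ℤ).toNat)=2 from rfl, show ((3:ℤ).toNat)=3 from rfl,
    show ((4:ℤ).toNat)=4 from rfl, show ((5:ℤ).toNat)=5 from rfl,
    show ((6:ℤ).toNat)=6 from rfl, h0, h1, h2, h3, h4, h5, h6, h0']
  ring

end
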